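/- Consider the lazy random walk on even integers: X₀ = 0, and X_{i+1} = X_i with probability 1−α, X_{i+1} = X_i + 2 with probability α/2, X_{i+1} = X_i − 2 with probability α/2, with α ∈ [0, 1/2]. Then Pr[X_n = 0] − Pr[X_n = 2] is a decreasing function of α. -/

import Mathlib

open Finset Real

/-- Distribution of the lazy random walk on the even integers: `walk α n k` is
the probability of being at position k after n steps, where each step stays
put with probability 1−α and moves ±2 with probability α/2 each. -/
noncomputable def walk (α : ℝ) : ℕ → ℤ → ℝ
  | 0, k => if k = 0 then 1 else 0
  | n + 1, k => (1 - α) * walk α n k + α / 2 * walk α n (k - 2) +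
      α / 2 * walk α n (k + 2)

noncomputable def hw (M : ℕ) (α : ℝ) (n : ℕ) (x : ℤ) : ℝ :=
  (∑ j ∈ Finset.range M,
    (1 - α + α * Real.cos (2 * π * j / M)) ^ n * Real.cos (2 * π * j * x / M)) / M

lemma sum_cos_eq (M : ℕ) (hM : 0 < M) (x : ℤ) :
    ∑ j ∈ Finset.range M, Real.cos (2 * π * j * x / M) =
      if (M : ℤ) ∣ x then (M : ℝ) else 0 := by
  have hM' : (M : ℝ) ≠ 0 := by positivity
  by_cases hdvd : (M : ℤ) ∣ x
  · obtain ⟨t, rfl⟩ := hdvd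
    rw [if_pos (dvd_mul_right _ _)]
    have key : ∀ j ∈ Finset.range M, Real.cos (2 * π * j * (((M : ℤ) * t : ℤ) : ℝ) / M) = 1 := by
      intro j _
      have : (2 * π * j * (((M : ℤ) * t : ℤ) : ℝ) / M : ℝ) = (j * t : ℤ) * (2 * π) := by
        push_cast
        field_simp
      rw [this, Real.cos_int_mul_two_pi]
    rw [Finset.sum_congr rfl key]
    simp
  · rw [if_neg hdvd]
    set z : ℂ := Complex.exp ((2 * π * x / M : ℝ) * Complex.I) with hz
    have hre : ∀ j : ℕ, Real.cos (2 * π * j * x / M) = (z ^ j).re := by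
      intro j
      rw [hz, ← Complex.exp_nat_mul]
      have : (j : ℂ) * ((2 * π * x / M : ℝ) * Complex.I) =
          ((2 * π * j * x / M : ℝ) : ℂ) * Complex.I := by
        push_cast; ring
      rw [this, Complex.exp_ofReal_mul_I_re]
    have hz1 : z ≠ 1 := by
      intro h
      rw [hz, Complex.exp_eq_one_iff] at h
      obtain ⟨k, hk⟩ := h
      apply hdvd
      have hMC : (M : ℂ) ≠ 0 := Nat.cast_ne_zero.mpr hM.ne'
      have hπ : (π : ℂ) ≠ 0 := by exact_mod_cast Real.pi_ne_zero
      have hI : (Complex.I : ℂ) ≠ 0 := Complex.I_ne_zero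
      have hx : (x : ℂ) = M * k := by
        push_cast at hk
        field_simp at hk
        have hne : (2 * (π:ℂ) * Complex.I) ≠ 0 := by
          simp [hπ, hI]
        apply mul_left_cancel₀ hne
        linear_combination (2 * (π:ℂ) * Complex.I) * hk
      exact ⟨k, by exact_mod_cast hx⟩
    have hzM : z ^ M = 1 := by
      rw [hz, ← Complex.exp_nat_mul]
      have : (M : ℂ) * ((2 * π * x / M : ℝ) * Complex.I) = x * (2 * π * Complex.I) := by
        push_cast
        have hMC : (M : ℂ) ≠ 0 := Nat.cast_ne_zero.mpr hM.ne'
        field_simp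
      rw [this, Complex.exp_int_mul_two_pi_mul_I]
    have hsum : ∑ j ∈ Finset.range M, z ^ j = 0 := by
      rw [geom_sum_eq hz1, hzM]
      simp
    calc ∑ j ∈ Finset.range M, Real.cos (2 * π * j * x / M)
        = (∑ j ∈ Finset.range M, z ^ j).re := by
          rw [Complex.re_sum]
          exact Finset.sum_congr rfl fun j _ => hre j
      _ = 0 := by rw [hsum]; simp

lemma hw_zero (M : ℕ) (hM : 0 < M) (α : ℝ) (x : ℤ) (hx : x.natAbs < M) :
    hw M α 0 x = if x = 0 then 1 else 0 := by
  have hM' : (M : ℝ) ≠ 0 := by positivity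
  unfold hw
  simp only [pow_zero, one_mul]
  rw [sum_cos_eq M hM x]
  by_cases h : x = 0
  · subst h
    simp [hM']
  · rw [if_neg h, if_neg, zero_div]
    intro hdvd
    exact h (Int.eq_zero_of_dvd_of_natAbs_lt_natAbs hdvd (by simpa using hx))

lemma hw_succ (M : ℕ) (α : ℝ) (n : ℕ) (x : ℤ) :
    hw M α (n + 1) x = (1 - α) * hw M α n x + α / 2 * hw M α n (x - 1) +
      α / 2 * hw M α n (x + 1) := by
  unfold hw
  have hr : ∀ S0 S1 S2 : ℝ, (1 - α) * (S0 / M) + α / 2 * (S1 / M) + α / 2 * (S2 / M)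
      = ((1 - α) * S0 + α / 2 * S1 + α / 2 * S2) / M := by
    intro S0 S1 S2; ring
  rw [hr]
  congr 1
  rw [Finset.mul_sum, Finset.mul_sum, Finset.mul_sum, ← Finset.sum_add_distrib,
    ← Finset.sum_add_distrib]
  refine Finset.sum_congr rfl fun j _ => ?_
  have hx1 : (2 * π * j * ((x - 1 : ℤ) : ℝ) / M) = 2 * π * j * x / M - 2 * π * j / M := by
    push_cast; ring
  have hx2 : (2 * π * j * ((x + 1 : ℤ) : ℝ) / M) = 2 * π * j * x / M + 2 * π * j / M := by
    push_cast; ring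
  rw [hx1, hx2, Real.cos_sub, Real.cos_add, pow_succ]
  ring

lemma walk_eq_hw (M : ℕ) (α : ℝ) : ∀ n : ℕ, ∀ x : ℤ, x.natAbs + n + 1 ≤ M →
    walk α n (2 * x) = hw M α n x := by
  intro n
  induction n with
  | zero =>
    intro x hx
    have hM : 0 < M := by omega
    rw [hw_zero M hM α x (by omega)]
    show (if 2 * x = 0 then (1:ℝ) else 0) = _
    by_cases h : x = 0 <;> simp [h]
  | succ n ih =>
    intro x hx
    have h1 : (x - 1).natAbs + n + 1 ≤ M := by omega
    have h2 : (x + 1).natAbs + n + 1 ≤ M := by omega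
    have h0 : x.natAbs + n + 1 ≤ M := by omega
    show (1 - α) * walk α n (2 * x) + α / 2 * walk α n (2 * x - 2) +
      α / 2 * walk α n (2 * x + 2) = _
    have e1 : 2 * x - 2 = 2 * (x - 1) := by ring
    have e2 : 2 * x + 2 = 2 * (x + 1) := by ring
    rw [e1, e2, ih x h0, ih (x - 1) h1, ih (x + 1) h2, hw_succ]

/-- Pr[X_n = 0] − Pr[X_n = 2] is a decreasing function of
α ∈ [0, 1/2]. -/
theorem walk_diff_antitone (n : ℕ) (α β : ℝ)
    (h0 : 0 ≤ α) (hαβ : α ≤ β) (hβ : β ≤ 1 / 2) :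
    walk β n 0 - walk β n 2 ≤ walk α n 0 - walk α n 2 := by
  have hβ0 : 0 ≤ β := le_trans h0 hαβ
  set M := n + 2 with hM
  have w0 : ∀ γ : ℝ, walk γ n 0 = hw M γ n 0 := fun γ => by
    have := walk_eq_hw M γ n 0 (by simp [hM])
    simpa using this
  have w2 : ∀ γ : ℝ, walk γ n 2 = hw M γ n 1 := fun γ => by
    have := walk_eq_hw M γ n 1 (by simp [hM]; omega)
    norm_num at this
    exact this
  rw [w0 α, w0 β, w2 α, w2 β]
  unfold hw
  rw [div_sub_div_same, div_sub_div_same]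
  have hMpos : (0:ℝ) < M := by positivity
  rw [div_le_div_iff_of_pos_right hMpos]
  rw [← Finset.sum_sub_distrib, ← Finset.sum_sub_distrib]
  apply Finset.sum_le_sum
  intro j _
  have e0 : (2 * π * (j:ℝ) * ((0:ℤ) : ℝ) / M) = 0 := by push_cast; ring
  have e1 : (2 * π * (j:ℝ) * ((1:ℤ) : ℝ) / M) = 2 * π * j / M := by push_cast; ring
  rw [e0, e1, Real.cos_zero]
  set c := Real.cos (2 * π * (j:ℝ) / M) with hc
  have hc1 : c ≤ 1 := Real.cos_le_one _
  have hc2 : -1 ≤ c := Real.neg_one_le_cos _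
  have hβpos : 0 ≤ 1 - β + β * c := by nlinarith
  have hmono : 1 - β + β * c ≤ 1 - α + α * c := by nlinarith
  have hpow := pow_le_pow_left₀ hβpos hmono n
  nlinarith [hpow, pow_nonneg hβpos n]
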